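/- arXiv:2102.13496 — 10 statements merged into one kernel-verified Lean document; each statement's English description precedes it below -/
import Mathlib

section
/- Let F be a cumulative distribution function on [0,∞) with density f that is MHR, i.e. the hazard rate f(t)/(1 − F(t)) is monotone nondecreasing on {t : F(t) < 1}, and suppose the mean µ = ∫₀^∞ t·f(t) dt is finite. Let α > 0 and define u(v,b) = v·F(b) − α·b·(1 − F(b)) − α·∫₀^b t·f(t) dt. Then for every v ≥ 0 and every b ≥ 0, u(v,b) ≤ max(0, v − α·µ); moreover u(v,0) = 0 and u(v,b) → v − α·µ as b → ∞. Consequently the supremum utility of the agent is max(0, v − α·µ): bidding 0 is optimal when v < α·µ and bidding arbitrarily high is optimal when v ≥ α·µ. -/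
open MeasureTheory Filter

/-- Lemma 4.3: for an MHR distribution `F` with density `f`, mean `μ`, and sample-bid
utility `u v b = v * F b - α * b * (1 - F b) - α * ∫ t in 0..b, t * f t`, every bid
yields utility at most `max 0 (v - α * μ)`, bidding `0` yields utility `0`, the utility
tends to `v - α * μ` as the bid tends to infinity, and consequently the supremum utility
is exactly `max 0 (v - α * μ)`. -/
theorem sample_bid_mhr_best_response
    (F f : ℝ → ℝ)
    (hf_nonneg : ∀ x, 0 ≤ f x)
    (hF_deriv : ∀ x, HasDerivAt F (f x) x)
    (hF_zero : F 0 = 0)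
    (hF_le_one : ∀ x, F x ≤ 1)
    (hF_lim : Tendsto F atTop (nhds 1))
    (hMHR : ∀ s t : ℝ, 0 ≤ s → s ≤ t → F t < 1 →
      f s / (1 - F s) ≤ f t / (1 - F t))
    (hint : IntegrableOn (fun t => t * f t) (Set.Ioi (0:ℝ)))
    (α : ℝ) (hα : 0 < α)
    (μ : ℝ) (hμ : μ = ∫ t in Set.Ioi (0:ℝ), t * f t)
    (u : ℝ → ℝ → ℝ)
    (hu : ∀ v b, u v b = v * F b - α * b * (1 - F b) - α * ∫ t in (0:ℝ)..b, t * f t) :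
    (∀ v b : ℝ, 0 ≤ v → 0 ≤ b → u v b ≤ max 0 (v - α * μ))
    ∧ (∀ v : ℝ, u v 0 = 0)
    ∧ (∀ v : ℝ, 0 ≤ v → Tendsto (fun b => u v b) atTop (nhds (v - α * μ)))
    ∧ (∀ v : ℝ, 0 ≤ v → IsLUB ((fun b => u v b) '' Set.Ici 0) (max 0 (v - α * μ))) := by
  -- basic facts
  have hF_cont : Continuous F := by
    have : Differentiable ℝ F := fun x => (hF_deriv x).differentiableAt
    exact this.continuous
  have hF_mono : Monotone F := by
    apply monotone_of_deriv_nonneg (fun x => (hF_deriv x).differentiableAt)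
    intro x; rw [(hF_deriv x).deriv]; exact hf_nonneg x
  have hF_nn : ∀ x, 0 ≤ x → 0 ≤ F x := fun x hx => hF_zero ▸ hF_mono hx
  have hf_meas : AEStronglyMeasurable f (volume : Measure ℝ) := by
    have : f = fun x => deriv F x := funext fun x => ((hF_deriv x).deriv).symm
    rw [this]
    exact (measurable_deriv F).aestronglyMeasurable
  have hfInt : ∀ a b : ℝ, IntervalIntegrable f volume a b := by
    intro a b
    apply intervalIntegral.intervalIntegrable_deriv_of_nonneg (hF_cont.continuousOn)
    · intro x _; exact hF_deriv x
    · intro x _; exact hf_nonneg x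
  have hFTC : ∀ a b : ℝ, ∫ x in a..b, f x = F b - F a := fun a b =>
    intervalIntegral.integral_eq_sub_of_hasDerivAt (fun x _ => hF_deriv x) (hfInt a b)
  have htfInt : ∀ a b : ℝ, IntervalIntegrable (fun t => t * f t) volume a b := fun a b =>
    (hfInt a b).continuousOn_mul continuous_id.continuousOn
  have hIBP : ∀ b : ℝ, ∫ t in (0:ℝ)..b, t * f t = b * F b - ∫ t in (0:ℝ)..b, F t := by
    intro b
    have := intervalIntegral.integral_mul_deriv_eq_deriv_mul
      (u := fun t : ℝ => t) (v := F) (u' := fun _ => (1:ℝ)) (v' := f)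
      (a := 0) (b := b) (fun x _ => hasDerivAt_id x) (fun x _ => hF_deriv x)
      (intervalIntegrable_const) (hfInt 0 b)
    simpa [hF_zero] using this
  have hG0b : ∀ b : ℝ, ∫ t in (0:ℝ)..b, (1 - F t) = b * (1 - F b) + ∫ t in (0:ℝ)..b, t * f t := by
    intro b
    have h1 : IntervalIntegrable F volume 0 b := hF_cont.intervalIntegrable 0 b
    rw [intervalIntegral.integral_sub intervalIntegrable_const h1, hIBP b]
    simp; ring
  -- split of μ
  have hsplit : ∀ b : ℝ, 0 ≤ b →
      μ = (∫ t in Set.Ioc (0:ℝ) b, t * f t) + ∫ t in Set.Ioi b, t * f t := by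
    intro b hb
    rw [hμ, ← Set.Ioc_union_Ioi_eq_Ioi hb]
    exact setIntegral_union (Set.Ioc_disjoint_Ioi le_rfl) measurableSet_Ioi
      (hint.mono_set (by rw [← Set.Ioc_union_Ioi_eq_Ioi hb]; exact Set.subset_union_left))
      (hint.mono_set (by rw [← Set.Ioc_union_Ioi_eq_Ioi hb]; exact Set.subset_union_right))
  have htail_nn : ∀ b : ℝ, 0 ≤ b → (0:ℝ) ≤ ∫ t in Set.Ioi b, t * f t := by
    intro b hb
    apply setIntegral_nonneg measurableSet_Ioi
    intro t ht
    exact mul_nonneg (le_of_lt (lt_of_le_of_lt hb ht)) (hf_nonneg t)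
  -- tail bound on b * (1 - F b)
  have hbG_le : ∀ b : ℝ, 0 < b → b * (1 - F b) ≤ ∫ t in Set.Ioi b, t * f t := by
    intro b hb
    have hfIntIoi : IntegrableOn f (Set.Ioi b) := by
      apply Integrable.mono' ((hint.mono_set (Set.Ioi_subset_Ioi hb.le)).const_mul (1/b))
        (hf_meas.restrict)
      filter_upwards [ae_restrict_mem measurableSet_Ioi] with t ht
      rw [Real.norm_of_nonneg (hf_nonneg t)]
      rw [Set.mem_Ioi] at ht
      rw [div_mul_eq_mul_div, le_div_iff₀ hb, one_mul]
      calc f t * b ≤ f t * t := by nlinarith [hf_nonneg t]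
        _ = t * f t := mul_comm _ _
    have h1 : Tendsto (fun c => ∫ x in b..c, f x) atTop (nhds (∫ x in Set.Ioi b, f x)) :=
      intervalIntegral_tendsto_integral_Ioi b hfIntIoi tendsto_id
    have h2 : Tendsto (fun c => ∫ x in b..c, f x) atTop (nhds (1 - F b)) := by
      simp only [hFTC]
      exact hF_lim.sub_const (F b)
    have hint_f : ∫ x in Set.Ioi b, f x = 1 - F b := tendsto_nhds_unique h1 h2
    calc b * (1 - F b) = ∫ t in Set.Ioi b, b * f t := by
          rw [integral_const_mul, hint_f]
      _ ≤ ∫ t in Set.Ioi b, t * f t := by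
          apply setIntegral_mono_on (hfIntIoi.const_mul b)
            (hint.mono_set (Set.Ioi_subset_Ioi hb.le)) measurableSet_Ioi
          intro t ht
          exact mul_le_mul_of_nonneg_right (le_of_lt ht) (hf_nonneg t)
  -- interval integral of t*f tends to μ
  have hμlim : Tendsto (fun b => ∫ t in (0:ℝ)..b, t * f t) atTop (nhds μ) := by
    rw [hμ]; exact intervalIntegral_tendsto_integral_Ioi 0 hint tendsto_id
  -- b * (1 - F b) → 0
  have hbG_lim : Tendsto (fun b => b * (1 - F b)) atTop (nhds 0) := by
    have hub : ∀ᶠ b in atTop, b * (1 - F b) ≤ μ - ∫ t in (0:ℝ)..b, t * f t := by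
      filter_upwards [eventually_gt_atTop (0:ℝ)] with b hb
      have := hsplit b hb.le
      have hIoc : ∫ t in (0:ℝ)..b, t * f t = ∫ t in Set.Ioc (0:ℝ) b, t * f t :=
        intervalIntegral.integral_of_le hb.le
      linarith [hbG_le b hb]
    have hlb : ∀ᶠ b in atTop, (0:ℝ) ≤ b * (1 - F b) := by
      filter_upwards [eventually_ge_atTop (0:ℝ)] with b hb
      exact mul_nonneg hb (by linarith [hF_le_one b])
    have : Tendsto (fun b => μ - ∫ t in (0:ℝ)..b, t * f t) atTop (nhds 0) := by
      have := (tendsto_const_nhds (x := μ) (f := atTop)).sub hμlim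
      simpa using this
    exact tendsto_of_tendsto_of_tendsto_of_le_of_le' tendsto_const_nhds this hlb hub
  -- G = 1 - F integrable on Ioi 0 with integral μ
  have hGlim : Tendsto (fun b => ∫ t in (0:ℝ)..b, (1 - F t)) atTop (nhds μ) := by
    simp only [hG0b]
    have := hbG_lim.add hμlim
    simpa using this
  have hGInt : IntegrableOn (fun t => 1 - F t) (Set.Ioi (0:ℝ)) := by
    apply integrableOn_Ioi_of_intervalIntegral_norm_tendsto μ 0
      (fun i : ℝ => ((continuous_const.sub hF_cont).integrableOn_Ioc)) tendsto_id
    have : ∀ b : ℝ, (∫ x in (0:ℝ)..b, ‖1 - F x‖) = ∫ x in (0:ℝ)..b, (1 - F x) := by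
      intro b
      apply intervalIntegral.integral_congr
      intro x _
      exact Real.norm_of_nonneg (by linarith [hF_le_one x])
    simpa only [id, Pi.sub_apply, this] using hGlim
  have hGμ : ∫ t in Set.Ioi (0:ℝ), (1 - F t) = μ :=
    tendsto_nhds_unique (intervalIntegral_tendsto_integral_Ioi 0 hGInt tendsto_id) hGlim
  -- partial integrals of G bounded by μ
  have hGpart : ∀ b : ℝ, 0 ≤ b → ∫ t in (0:ℝ)..b, (1 - F t) ≤ μ := by
    intro b hb
    rcases eq_or_lt_of_le hb with h|h
    · simp [← h]
      rw [hμ]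
      exact setIntegral_nonneg measurableSet_Ioi
        (fun t ht => mul_nonneg (le_of_lt ht) (hf_nonneg t))
    · rw [hG0b]
      have h1 := hbG_le b h
      have h2 := hsplit b hb
      have hIoc : ∫ t in (0:ℝ)..b, t * f t = ∫ t in Set.Ioc (0:ℝ) b, t * f t :=
        intervalIntegral.integral_of_le hb
      linarith
  -- NBU property from MHR
  -- hazard rate integral facts
  have hG_pos : ∀ q x : ℝ, x ≤ q → F q < 1 → 0 < 1 - F x := by
    intro q x hx hq
    have := hF_mono hx
    linarith
  have hHInt : ∀ p q : ℝ, p ≤ q → F q < 1 →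
      IntervalIntegrable (fun x => f x / (1 - F x)) volume p q := by
    intro p q hpq hq
    apply intervalIntegral.intervalIntegrable_deriv_of_nonneg
      (g := fun x => -Real.log (1 - F x))
    · apply ContinuousOn.neg
      apply ContinuousOn.log ((continuous_const.sub hF_cont).continuousOn)
      intro x hx
      rw [Set.uIcc_of_le hpq] at hx
      exact ne_of_gt (hG_pos q x hx.2 hq)
    · intro x hx
      rw [min_eq_left hpq, max_eq_right hpq] at hx
      have hx1 : (1:ℝ) - F x ≠ 0 := ne_of_gt (hG_pos q x hx.2.le hq)
      have := (((hF_deriv x).const_sub 1).log hx1).neg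
      exact this.congr_deriv (by ring)
    · intro x hx
      rw [min_eq_left hpq, max_eq_right hpq] at hx
      exact div_nonneg (hf_nonneg x) (hG_pos q x hx.2.le hq).le
  have hHFTC : ∀ p q : ℝ, p ≤ q → F q < 1 →
      ∫ x in p..q, f x / (1 - F x)
        = -Real.log (1 - F q) - -Real.log (1 - F p) := by
    intro p q hpq hq
    apply intervalIntegral.integral_eq_sub_of_hasDerivAt
    · intro x hx
      rw [Set.uIcc_of_le hpq] at hx
      have hx1 : (1:ℝ) - F x ≠ 0 := ne_of_gt (hG_pos q x hx.2 hq)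
      have := (((hF_deriv x).const_sub 1).log hx1).neg
      convert this using 1 <;> simp [Pi.neg_def, neg_div]
    · exact hHInt p q hpq hq
  -- NBU property from MHR
  have hNBU : ∀ b s : ℝ, 0 ≤ b → 0 ≤ s → 1 - F (b + s) ≤ (1 - F b) * (1 - F s) := by
    intro b s hb hs
    rcases lt_or_ge (F (b + s)) 1 with hlt|hge
    · -- all relevant values of F are < 1
      have hFb : F b < 1 := by linarith [hG_pos (b+s) b (by linarith) hlt]
      have hFs : F s < 1 := by linarith [hG_pos (b+s) s (by linarith) hlt]
      have key : ∫ x in (0:ℝ)..s, f x / (1 - F x)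
          ≤ ∫ x in b..(b+s), f x / (1 - F x) := by
        have hcomp : ∫ x in b..(b+s), f x / (1 - F x)
            = ∫ x in (0:ℝ)..s, f (x + b) / (1 - F (x + b)) := by
          rw [intervalIntegral.integral_comp_add_right (fun y => f y / (1 - F y)) b]
          norm_num [add_comm b s]
        rw [hcomp]
        apply intervalIntegral.integral_mono_on hs (hHInt 0 s hs hFs)
        · have := (hHInt b (b+s) (by linarith) hlt).comp_add_right b
          simpa using this
        · intro x hx
          exact hMHR x (x + b) hx.1 (by linarith) (by
            have : F (x + b) ≤ F (b + s) := hF_mono (by linarith [hx.2])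
            linarith)
      rw [hHFTC 0 s hs hFs, hHFTC b (b+s) (by linarith) hlt] at key
      rw [hF_zero] at key
      have hlog : Real.log (1 - F (b+s)) ≤ Real.log ((1 - F b) * (1 - F s)) := by
        rw [Real.log_mul (by linarith) (by linarith)]
        simp at key
        linarith
      exact (Real.log_le_log_iff (by linarith) (mul_pos (by linarith) (by linarith))).mp hlog
    · have h1 : F (b + s) = 1 := le_antisymm (hF_le_one _) hge
      rw [h1]
      simp
      exact mul_nonneg (by linarith [hF_le_one b]) (by linarith [hF_le_one s])
  -- star: tail integral of G bounded via NBU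
  have hstar : ∀ b : ℝ, 0 ≤ b →
      ∫ t in Set.Ioi b, (1 - F t) ≤ (1 - F b) * μ := by
    intro b hb
    have hGb : IntegrableOn (fun t => 1 - F t) (Set.Ioi b) :=
      hGInt.mono_set (Set.Ioi_subset_Ioi hb)
    apply le_of_tendsto (intervalIntegral_tendsto_integral_Ioi b hGb tendsto_id)
    filter_upwards [eventually_ge_atTop b] with c hc
    simp only [id]
    have hcomp : ∫ x in b..c, (1 - F x) = ∫ x in (0:ℝ)..(c-b), (1 - F (x + b)) := by
      rw [intervalIntegral.integral_comp_add_right (fun y => (1:ℝ) - F y) b]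
      norm_num
    rw [hcomp]
    calc ∫ x in (0:ℝ)..(c-b), (1 - F (x + b))
        ≤ ∫ x in (0:ℝ)..(c-b), (1 - F b) * (1 - F x) := by
          apply intervalIntegral.integral_mono_on (by linarith)
          · exact ((continuous_const.sub (hF_cont.comp (continuous_id.add
              continuous_const)))).intervalIntegrable 0 (c-b)
          · exact ((continuous_const.mul (continuous_const.sub hF_cont))).intervalIntegrable
              0 (c-b)
          · intro x hx
            have := hNBU b x hb hx.1
            rw [add_comm x b]
            exact this
      _ = (1 - F b) * ∫ x in (0:ℝ)..(c-b), (1 - F x) := by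
          rw [intervalIntegral.integral_const_mul]
      _ ≤ (1 - F b) * μ := by
          apply mul_le_mul_of_nonneg_left (hGpart (c-b) (by linarith))
          linarith [hF_le_one b]
  -- split for G
  have hsplitG : ∀ b : ℝ, 0 ≤ b →
      μ = (∫ t in Set.Ioc (0:ℝ) b, (1 - F t)) + ∫ t in Set.Ioi b, (1 - F t) := by
    intro b hb
    rw [← hGμ, ← Set.Ioc_union_Ioi_eq_Ioi hb]
    exact setIntegral_union (Set.Ioc_disjoint_Ioi le_rfl) measurableSet_Ioi
      (hGInt.mono_set (by rw [← Set.Ioc_union_Ioi_eq_Ioi hb]; exact Set.subset_union_left))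
      (hGInt.mono_set (by rw [← Set.Ioc_union_Ioi_eq_Ioi hb]; exact Set.subset_union_right))
  -- main inequality
  have hmain : ∀ v b : ℝ, 0 ≤ b → u v b ≤ F b * (v - α * μ) := by
    intro v b hb
    have he : u v b = v * F b - α * ∫ t in (0:ℝ)..b, (1 - F t) := by
      rw [hu, hG0b]; ring
    have hIoc : ∫ t in (0:ℝ)..b, (1 - F t) = ∫ t in Set.Ioc (0:ℝ) b, (1 - F t) :=
      intervalIntegral.integral_of_le hb
    have h2 := hsplitG b hb
    have h3 := hstar b hb
    rw [he, hIoc]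
    nlinarith [hα]
  have part1 : ∀ v b : ℝ, 0 ≤ v → 0 ≤ b → u v b ≤ max 0 (v - α * μ) := by
    intro v b hv hb
    refine le_trans (hmain v b hb) ?_
    rcases le_or_gt (v - α * μ) 0 with h|h
    · exact le_trans (mul_nonpos_of_nonneg_of_nonpos (hF_nn b hb) h) (le_max_left _ _)
    · refine le_trans ?_ (le_max_right _ _)
      nlinarith [hF_le_one b, hF_nn b hb]
  have part2 : ∀ v : ℝ, u v 0 = 0 := by
    intro v
    rw [hu]
    simp [hF_zero]
  have part3 : ∀ v : ℝ, 0 ≤ v → Tendsto (fun b => u v b) atTop (nhds (v - α * μ)) := by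
    intro v hv
    have : Tendsto (fun b => v * F b - α * (b * (1 - F b)) - α * ∫ t in (0:ℝ)..b, t * f t)
        atTop (nhds (v * 1 - α * 0 - α * μ)) :=
      (((tendsto_const_nhds.mul hF_lim).sub
        (tendsto_const_nhds.mul hbG_lim)).sub (tendsto_const_nhds.mul hμlim))
    simp only [mul_one, mul_zero, sub_zero] at this
    apply this.congr
    intro b
    rw [hu]; ring
  have part4 : ∀ v : ℝ, 0 ≤ v → IsLUB ((fun b => u v b) '' Set.Ici 0) (max 0 (v - α * μ)) := by
    intro v hv
    constructor
    · rintro x ⟨b, hb, rfl⟩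
      exact part1 v b hv hb
    · intro w hw
      apply max_le
      · have : u v 0 ∈ (fun b => u v b) '' Set.Ici 0 := ⟨0, Set.self_mem_Ici, rfl⟩
        have := hw this
        rw [part2 v] at this
        exact this
      · apply le_of_tendsto (part3 v hv)
        filter_upwards [eventually_ge_atTop (0:ℝ)] with b hb
        exact hw ⟨b, hb, rfl⟩
  exact ⟨part1, part2, part3, part4⟩
end

section
/- Let F be an MHR cumulative distribution function on [0,∞) with density f (i.e. f(t)/(1 − F(t)) is monotone nondecreasing on {t : F(t) < 1}), and write q(v) = 1 − F(v). Suppose 0 ≤ v₂ < v₁ and 0 < q₁ ≤ q₂ where q₁ = q(v₁) and q₂ = q(v₂). Then for every v ∈ [v₂, v₁], q(v) ≥ q₂ · exp( ((v − v₂)/(v₁ − v₂)) · ln(q₁/q₂) ), i.e. q(v) ≥ q₂ · (q₁/q₂)^{(v − v₂)/(v₁ − v₂)}. -/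
/-- Lemma 4.4 (quantile interpolation bound for MHR distributions): for an MHR
distribution `F` with density `f`, quantile `q v = 1 - F v`, reference points
`0 ≤ v₂ < v₁` with quantiles `q₂ ≥ q₁ > 0`, and any `v ∈ [v₂, v₁]`,
`1 - F v ≥ q₂ * exp (((v - v₂)/(v₁ - v₂)) * log (q₁/q₂))`. -/
theorem mhr_quantile_interpolation
    (F f : ℝ → ℝ)
    (hf_nonneg : ∀ x, 0 ≤ f x)
    (hF_deriv : ∀ x, HasDerivAt F (f x) x)
    (hMHR : ∀ s t : ℝ, 0 ≤ s → s ≤ t → F t < 1 →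
      f s / (1 - F s) ≤ f t / (1 - F t))
    (v₁ v₂ : ℝ) (hv₂ : 0 ≤ v₂) (hv₂₁ : v₂ < v₁)
    (q₁ q₂ : ℝ) (hq₁ : q₁ = 1 - F v₁) (hq₂ : q₂ = 1 - F v₂)
    (hq₁_pos : 0 < q₁) (hq₁₂ : q₁ ≤ q₂)
    (v : ℝ) (hv : v ∈ Set.Icc v₂ v₁) :
    q₂ * Real.exp (((v - v₂) / (v₁ - v₂)) * Real.log (q₁ / q₂)) ≤ 1 - F v := by
  obtain ⟨hvl, hvr⟩ := hv
  have hq₂_pos : 0 < q₂ := lt_of_lt_of_le hq₁_pos hq₁₂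
  -- F is monotone
  have hFmono : Monotone F := by
    apply monotone_of_deriv_nonneg
    · exact fun x => (hF_deriv x).differentiableAt
    · intro x
      rw [(hF_deriv x).deriv]
      exact hf_nonneg x
  -- 1 - F x > 0 for x ≤ v₁
  have hpos : ∀ x, x ≤ v₁ → 0 < 1 - F x := by
    intro x hx
    have : F x ≤ F v₁ := hFmono hx
    have : 1 - F v₁ ≤ 1 - F x := by linarith
    linarith [hq₁ ▸ hq₁_pos]
  set G : ℝ → ℝ := fun x => Real.log (1 - F x) with hG
  have hGderiv : ∀ x, x ≤ v₁ → HasDerivAt G (-f x / (1 - F x)) x := by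
    intro x hx
    have h1 : HasDerivAt (fun y => 1 - F y) (-f x) x := by
      simpa using (hF_deriv x).const_sub 1
    exact h1.log (ne_of_gt (hpos x hx))
  -- concavity of G on Icc v₂ v₁
  have hconc : ConcaveOn ℝ (Set.Icc v₂ v₁) G := by
    have hcont : ContinuousOn G (Set.Icc v₂ v₁) := fun x hx =>
      ((hGderiv x hx.2).continuousAt).continuousWithinAt
    have hint : interior (Set.Icc v₂ v₁) = Set.Ioo v₂ v₁ := interior_Icc
    apply AntitoneOn.concaveOn_of_deriv (convex_Icc _ _) hcont
    · rw [hint]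
      intro x hx
      exact ((hGderiv x (le_of_lt hx.2)).differentiableAt).differentiableWithinAt
    rw [hint]
    intro x hx y hy hxy
    rw [(hGderiv x (le_of_lt hx.2)).deriv, (hGderiv y (le_of_lt hy.2)).deriv]
    have h0x : (0:ℝ) ≤ x := le_trans hv₂ (le_of_lt hx.1)
    have hFy : F y < 1 := by linarith [hpos y (le_of_lt hy.2)]
    have := hMHR x y h0x hxy hFy
    have := neg_le_neg this
    rw [neg_div, neg_div] at *
    linarith
  -- apply concavity at v
  set t : ℝ := (v - v₂) / (v₁ - v₂) with ht
  have hden : 0 < v₁ - v₂ := by linarith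
  have ht0 : 0 ≤ t := div_nonneg (by linarith) (le_of_lt hden)
  have ht1 : t ≤ 1 := by
    rw [ht, div_le_one hden]; linarith
  have hvrep : (1 - t) * v₂ + t * v₁ = v := by
    have htm : t * (v₁ - v₂) = v - v₂ := by rw [ht]; exact div_mul_cancel₀ _ (ne_of_gt hden)
    linear_combination htm
  have hkey : (1 - t) * G v₂ + t * G v₁ ≤ G v := by
    have := hconc.2 (Set.left_mem_Icc.2 (le_of_lt hv₂₁))
      (Set.right_mem_Icc.2 (le_of_lt hv₂₁)) (by linarith : (0:ℝ) ≤ 1 - t) ht0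
      (by ring : (1 - t) + t = 1)
    simpa [smul_eq_mul, hvrep] using this
  -- translate
  have hGv₁ : G v₁ = Real.log q₁ := by rw [hG, hq₁]
  have hGv₂ : G v₂ = Real.log q₂ := by rw [hG, hq₂]
  have hlog : Real.log (q₁ / q₂) = Real.log q₁ - Real.log q₂ :=
    Real.log_div (ne_of_gt hq₁_pos) (ne_of_gt hq₂_pos)
  have hposv : 0 < 1 - F v := hpos v hvr
  calc q₂ * Real.exp (t * Real.log (q₁ / q₂))
      = Real.exp (Real.log q₂ + t * (Real.log q₁ - Real.log q₂)) := by
        rw [Real.exp_add, Real.exp_log hq₂_pos, hlog]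
    _ = Real.exp ((1 - t) * G v₂ + t * G v₁) := by rw [hGv₁, hGv₂]; ring_nf
    _ ≤ Real.exp (G v) := Real.exp_le_exp.2 hkey
    _ = 1 - F v := Real.exp_log hposv
end

section
/- Let F be an MHR cumulative distribution function on [0,∞) with density f (i.e. f(t)/(1 − F(t)) is monotone nondecreasing on {t : F(t) < 1}), write q(v) = 1 − F(v), and suppose there is q_m ∈ (0,1) with q(1/q_m) = q_m (i.e. the monopoly revenue is normalized so that posting price 1/q_m sells with probability q_m, giving revenue 1). Then the expected value satisfies ∫₀^∞ q(v) dv ≥ (q_m − 1)/(q_m · ln q_m). -/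
open MeasureTheory

/-- Lemma 4.5: for a normalized MHR distribution (monopoly price `1/q_m`, monopoly
quantile `q_m`, so `1 - F (1/q_m) = q_m` and the monopoly revenue is `1`), the expected
value `∫ v in (0,∞), (1 - F v)` is at least `(q_m - 1)/(q_m * log q_m)`. -/
theorem mhr_expected_value_lower_bound
    (F f : ℝ → ℝ)
    (hf_nonneg : ∀ x, 0 ≤ f x)
    (hF_deriv : ∀ x, HasDerivAt F (f x) x)
    (hF_zero : F 0 = 0)
    (hF_le_one : ∀ x, F x ≤ 1)
    (hMHR : ∀ s t : ℝ, 0 ≤ s → s ≤ t → F t < 1 →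
      f s / (1 - F s) ≤ f t / (1 - F t))
    (qm : ℝ) (hqm : qm ∈ Set.Ioo (0:ℝ) 1)
    (hmonopoly : 1 - F (1 / qm) = qm) :
    (qm - 1) / (qm * Real.log qm) ≤ ∫ v in Set.Ioi (0:ℝ), (1 - F v) := by
  obtain ⟨hq0, hq1⟩ := hqm
  have hlogqm_neg : Real.log qm < 0 := Real.log_neg hq0 hq1
  set M : ℝ := 1 / qm with hMdef
  have hM : 0 < M := by positivity
  set q : ℝ → ℝ := fun v => 1 - F v with hqdef
  have hq_deriv : ∀ x, HasDerivAt q (-(f x)) x := fun x => by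
    simpa using (hF_deriv x).const_sub 1
  have hq_nonneg : ∀ x, 0 ≤ q x := fun x => sub_nonneg.2 (hF_le_one x)
  have hq_anti : Antitone q := by
    refine antitone_of_deriv_nonpos (fun x => (hq_deriv x).differentiableAt) fun x => ?_
    rw [(hq_deriv x).deriv]
    simpa using hf_nonneg x
  have hF_cont : Continuous F :=
    continuous_iff_continuousAt.2 fun x => (hF_deriv x).differentiableAt.continuousAt
  have hq_cont : Continuous q := continuous_const.sub hF_cont
  have hqM : q M = qm := hmonopoly
  have hq_pos_le : ∀ v, v ≤ M → 0 < q v := fun v hv => lt_of_lt_of_le (hqM ▸ hq0) (hq_anti hv)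
  have hq01 : q 0 = 1 := by simp [hqdef, hF_zero]
  -- log of the survival function
  set L : ℝ → ℝ := fun v => Real.log (q v) with hLdef
  have hL_deriv : ∀ x, 0 < q x → HasDerivAt L (-(f x) / q x) x := fun x hx =>
    (hq_deriv x).log (ne_of_gt hx)
  have hFlt : ∀ x, 0 < q x → F x < 1 := fun x hx => by
    have : 0 < 1 - F x := hx
    linarith
  set c : ℝ := qm * Real.log qm with hcdef
  have hc_neg : c < 0 := mul_neg_of_pos_of_neg hq0 hlogqm_neg
  have hc_ne : c ≠ 0 := ne_of_lt hc_neg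
  have hcM : c * M = Real.log qm := by
    rw [hcdef, hMdef, mul_comm qm, mul_assoc, mul_one_div_cancel hq0.ne', mul_one]
  -- Step A: pointwise lower bound on [0, M]
  have hA : ∀ v ∈ Set.Icc (0:ℝ) M, Real.exp (c * v) ≤ q v := by
    set φ : ℝ → ℝ := fun v => L v - c * v with hφdef
    have hφ_deriv : ∀ x, 0 < q x → HasDerivAt φ (-(f x) / q x - c) x := fun x hx => by
      have h := (hL_deriv x hx).sub ((hasDerivAt_id x).const_mul c)
      rw [mul_one] at h
      exact h
    have hconc : ConcaveOn ℝ (Set.Icc 0 M) φ := by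
      refine AntitoneOn.concaveOn_of_deriv (convex_Icc 0 M) ?_ ?_ ?_
      · exact fun x hx =>
          ((hφ_deriv x (hq_pos_le x hx.2)).differentiableAt.continuousAt).continuousWithinAt
      · rw [interior_Icc]
        exact fun x hx => ((hφ_deriv x (hq_pos_le x hx.2.le)).differentiableAt).differentiableWithinAt
      · rw [interior_Icc]
        intro x hx y hy hxy
        rw [(hφ_deriv x (hq_pos_le x hx.2.le)).deriv, (hφ_deriv y (hq_pos_le y hy.2.le)).deriv]
        have := hMHR x y hx.1.le hxy (hFlt y (hq_pos_le y hy.2.le))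
        have hx' : q x = 1 - F x := rfl
        have hy' : q y = 1 - F y := rfl
        rw [neg_div, neg_div, hx', hy']
        linarith
    have hφ0 : φ 0 = 0 := by simp [hφdef, hq01, hLdef]
    have hφM : φ M = 0 := by
      simp only [hφdef, hLdef, hqM, hcM]
      ring
    intro v hv
    have hseg : v ∈ segment ℝ (0:ℝ) M := by
      rw [segment_eq_Icc hM.le]; exact hv
    have := hconc.ge_on_segment (Set.left_mem_Icc.2 hM.le) (Set.right_mem_Icc.2 hM.le) hseg
    rw [hφ0, hφM, min_self] at this
    have hLv : c * v ≤ L v := by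
      have : 0 ≤ L v - c * v := this
      linarith
    calc Real.exp (c * v) ≤ Real.exp (L v) := Real.exp_le_exp.2 hLv
      _ = q v := Real.exp_log (hq_pos_le v hv.2)
  -- Step B: the hazard rate at M is positive
  have hlam0 : 0 < f M / qm := by
    obtain ⟨x, hx, hslope⟩ := exists_hasDerivAt_eq_slope L (fun x => -(f x) / q x) hM
      (fun t ht => ((hL_deriv t (hq_pos_le t ht.2)).differentiableAt.continuousAt).continuousWithinAt)
      (fun t ht => hL_deriv t (hq_pos_le t ht.2.le))
    have hLM : L M = Real.log qm := by rw [hLdef]; simp [hqM]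
    have hL0 : L 0 = 0 := by simp [hLdef, hq01]
    rw [hLM, hL0, sub_zero, sub_zero] at hslope
    have hxpos : 0 < f x / q x := by
      have : -(f x) / q x < 0 := by
        rw [hslope]
        exact div_neg_of_neg_of_pos hlogqm_neg hM
      rw [neg_div] at this
      linarith
    have hle := hMHR x M hx.1.le hx.2.le (hFlt M (hqM ▸ hq0))
    have hx' : q x = 1 - F x := rfl
    have hM' : q M = 1 - F M := rfl
    rw [← hx', ← hM', hqM] at hle
    linarith
  set lam0 : ℝ := f M / qm with hlam0def
  -- Step B2: exponential tail bound for v ≥ M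
  have hB : ∀ v, M ≤ v → q v ≤ qm * Real.exp (-lam0 * (v - M)) := by
    intro v hv
    rcases (hq_nonneg v).lt_or_eq with hpos | hzero
    · -- q v > 0
      have hqpos : ∀ t ∈ Set.Icc M v, 0 < q t := fun t ht =>
        lt_of_lt_of_le hpos (hq_anti ht.2)
      set ψ : ℝ → ℝ := fun t => L t + lam0 * (t - M) with hψdef
      have hψ_deriv : ∀ t, 0 < q t → HasDerivAt ψ (-(f t) / q t + lam0) t := fun t ht => by
        have h2 : HasDerivAt (fun t : ℝ => lam0 * (t - M)) lam0 t := by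
          simpa using ((hasDerivAt_id t).sub_const M).const_mul lam0
        exact (hL_deriv t ht).add h2
      have hanti : AntitoneOn ψ (Set.Icc M v) := by
        refine antitoneOn_of_deriv_nonpos (convex_Icc M v) ?_ ?_ ?_
        · exact fun t ht =>
            ((hψ_deriv t (hqpos t ht)).differentiableAt.continuousAt).continuousWithinAt
        · rw [interior_Icc]
          exact fun t ht =>
            ((hψ_deriv t (hqpos t (Set.mem_Icc_of_Ioo ht))).differentiableAt).differentiableWithinAt
        · rw [interior_Icc]
          intro t ht
          rw [(hψ_deriv t (hqpos t (Set.mem_Icc_of_Ioo ht))).deriv]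
          have hle := hMHR M t hM.le ht.1.le (hFlt t (hqpos t (Set.mem_Icc_of_Ioo ht)))
          have ht' : q t = 1 - F t := rfl
          have hM' : q M = 1 - F M := rfl
          rw [← ht', ← hM', hqM] at hle
          rw [neg_div]
          rw [hlam0def]
          linarith
      have hψle := hanti (Set.left_mem_Icc.2 hv) (Set.right_mem_Icc.2 hv) hv
      have hψM : ψ M = Real.log qm := by simp [hψdef, hLdef, hqM]
      rw [hψM] at hψle
      have hLv : L v ≤ Real.log qm + (-lam0 * (v - M)) := by
        have : L v + lam0 * (v - M) ≤ Real.log qm := hψle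
        linarith
      calc q v = Real.exp (L v) := (Real.exp_log hpos).symm
        _ ≤ Real.exp (Real.log qm + (-lam0 * (v - M))) := Real.exp_le_exp.2 hLv
        _ = qm * Real.exp (-lam0 * (v - M)) := by
            rw [Real.exp_add, Real.exp_log hq0]
    · rw [← hzero]
      positivity
  -- Step C: integrability on Ioi 0
  have hIntIoc : IntegrableOn q (Set.Ioc 0 M) := hq_cont.integrableOn_Ioc
  have hIntIoi : IntegrableOn q (Set.Ioi M) := by
    have hg : IntegrableOn (fun v => (qm * Real.exp (lam0 * M)) * Real.exp (-lam0 * v))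
        (Set.Ioi M) := (exp_neg_integrableOn_Ioi M hlam0).const_mul _
    refine MeasureTheory.Integrable.mono hg (hq_cont.aestronglyMeasurable.restrict) ?_
    refine (ae_restrict_iff' measurableSet_Ioi).2 (ae_of_all _ fun v hv => ?_)
    have h1 := hB v (le_of_lt hv)
    have h2 : qm * Real.exp (-lam0 * (v - M)) = (qm * Real.exp (lam0 * M)) * Real.exp (-lam0 * v) := by
      rw [mul_assoc, ← Real.exp_add]
      ring_nf
    rw [Real.norm_eq_abs, Real.norm_eq_abs, abs_of_nonneg (hq_nonneg v), abs_of_nonneg (by positivity)]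
    rw [h2] at h1
    exact h1
  have hInt : IntegrableOn q (Set.Ioi 0) := by
    rw [← Set.Ioc_union_Ioi_eq_Ioi hM.le]
    exact hIntIoc.union hIntIoi
  -- Step D: compare integrals
  have hstep1 : ∫ v in Set.Ioc (0:ℝ) M, q v ≤ ∫ v in Set.Ioi (0:ℝ), q v := by
    refine setIntegral_mono_set hInt ?_ (HasSubset.Subset.eventuallyLE Set.Ioc_subset_Ioi_self)
    exact ae_of_all _ fun v => hq_nonneg v
  have hIntExp : IntegrableOn (fun v => Real.exp (c * v)) (Set.Ioc 0 M) :=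
    (Real.continuous_exp.comp (continuous_const.mul continuous_id)).integrableOn_Ioc
  have hstep2 : ∫ v in Set.Ioc (0:ℝ) M, Real.exp (c * v) ≤ ∫ v in Set.Ioc (0:ℝ) M, q v := by
    refine setIntegral_mono_on hIntExp hIntIoc measurableSet_Ioc fun v hv => ?_
    exact hA v ⟨hv.1.le, hv.2⟩
  have hcalc : ∫ v in Set.Ioc (0:ℝ) M, Real.exp (c * v) = (qm - 1) / (qm * Real.log qm) := by
    have h1 : ∫ v in Set.Ioc (0:ℝ) M, Real.exp (c * v)
        = ∫ v in (0:ℝ)..M, Real.exp (c * v) := by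
      rw [intervalIntegral.integral_of_le hM.le]
    rw [h1]
    have hderiv : ∀ x ∈ Set.uIcc (0:ℝ) M,
        HasDerivAt (fun x => Real.exp (c * x) / c) (Real.exp (c * x)) x := by
      intro x _
      have : HasDerivAt (fun x => Real.exp (c * x)) (Real.exp (c * x) * c) x := by
        have h := (Real.hasDerivAt_exp (c * x)).comp x ((hasDerivAt_id x).const_mul c)
        rw [mul_one] at h
        exact h
      simpa [mul_div_assoc, mul_div_cancel_right₀ _ hc_ne] using this.div_const c
    rw [intervalIntegral.integral_eq_sub_of_hasDerivAt hderiv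
      ((Real.continuous_exp.comp (continuous_const.mul continuous_id)).intervalIntegrable 0 M)]
    rw [hcM, Real.exp_log hq0]
    simp only [mul_zero, Real.exp_zero]
    rw [hcdef]
    ring
  calc (qm - 1) / (qm * Real.log qm) = ∫ v in Set.Ioc (0:ℝ) M, Real.exp (c * v) := hcalc.symm
    _ ≤ ∫ v in Set.Ioc (0:ℝ) M, q v := hstep2
    _ ≤ ∫ v in Set.Ioi (0:ℝ), q v := hstep1
end

section
/- Let F be a cumulative distribution function on [0,∞) with density f, let α ∈ (0,1], and let v_m ≥ 0 be such that t·f(t) ≥ 1 − F(t) for all t ≥ v_m. Define u(v,b) = v·F(b) − α·b·(1 − F(b)) − α·∫₀^b t·f(t) dt. Then for every value v ≥ v_m and every bid b ∈ [v_m, v/α], u(v, v/α) ≥ u(v, b). -/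
open MeasureTheory

/-- Lemma 5.5: in the sample-bid mechanism with parameter `α ∈ (0, 1]`, for a
distribution whose virtual value is nonnegative above the monopoly reserve `vm`
(i.e. `1 - F t ≤ t * f t` for `t ≥ vm`), an agent with value `v ≥ vm` weakly prefers
bidding `v / α` to any bid in `[vm, v / α]`. -/
theorem sample_bid_prefers_scaled_value
    (F f : ℝ → ℝ) (hf_cont : Continuous f)
    (hf_nonneg : ∀ x, 0 ≤ f x)
    (hF_deriv : ∀ x, HasDerivAt F (f x) x)
    (α : ℝ) (hα_pos : 0 < α) (hα_le : α ≤ 1)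
    (vm : ℝ) (hvm : 0 ≤ vm)
    (hreg : ∀ t : ℝ, vm ≤ t → 1 - F t ≤ t * f t)
    (u : ℝ → ℝ → ℝ)
    (hu : ∀ v b, u v b = v * F b - α * b * (1 - F b) - α * ∫ t in (0:ℝ)..b, t * f t)
    (v : ℝ) (hv : vm ≤ v)
    (b : ℝ) (hb : b ∈ Set.Icc vm (v / α)) :
    u v b ≤ u v (v / α) := by
  obtain ⟨hb1, hb2⟩ := hb
  set g : ℝ → ℝ := fun x => v * F x - α * x * (1 - F x) - α * ∫ t in (0:ℝ)..x, t * f t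
    with hg
  have hderiv : ∀ x : ℝ, HasDerivAt g (v * f x - α * (1 - F x)) x := by
    intro x
    have h1 : HasDerivAt (fun x => v * F x) (v * f x) x := (hF_deriv x).const_mul v
    have h2 : HasDerivAt (fun x => α * x * (1 - F x))
        (α * (1 - F x) + α * x * (-(f x))) x := by
      have := (((hasDerivAt_id x).const_mul α).mul
        ((hF_deriv x).const_sub 1))
      simpa [Pi.mul_def, mul_comm, mul_assoc, mul_left_comm] using this
    have h3 : HasDerivAt (fun x => ∫ t in (0:ℝ)..x, t * f t) (x * f x) x :=
      (continuous_id.mul hf_cont).integral_hasStrictDerivAt 0 x |>.hasDerivAt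
    have := (h1.sub h2).sub (h3.const_mul α)
    exact this.congr_deriv (by ring)
  have hmono : MonotoneOn g (Set.Icc vm (v / α)) := by
    apply monotoneOn_of_deriv_nonneg (convex_Icc _ _)
    · exact (Continuous.continuousOn (by
        have : ∀ x, HasDerivAt g (v * f x - α * (1 - F x)) x := hderiv
        exact continuous_iff_continuousAt.2 fun x => (this x).continuousAt))
    · intro x hx
      exact ((hderiv x).differentiableAt).differentiableWithinAt
    · intro x hx
      rw [(hderiv x).deriv]
      rw [interior_Icc] at hx
      have hxvm : vm ≤ x := le_of_lt hx.1
      have h1 : 1 - F x ≤ x * f x := hreg x hxvm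
      have h2 : α * (1 - F x) ≤ α * (x * f x) :=
        mul_le_mul_of_nonneg_left h1 hα_pos.le
      have h3 : α * (x * f x) ≤ v * f x := by
        have hxle : α * x ≤ v := by
          have := hx.2.le
          calc α * x ≤ α * (v / α) := by
                exact mul_le_mul_of_nonneg_left this hα_pos.le
            _ = v := by field_simp
        calc α * (x * f x) = (α * x) * f x := by ring
          _ ≤ v * f x := mul_le_mul_of_nonneg_right hxle (hf_nonneg x)
      linarith
  have := hmono ⟨hb1, hb2⟩ ⟨le_trans hb1 hb2, le_refl _⟩ hb2
  simpa [hu, hg] using this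
end

section
/- Let R: [0,1] → ℝ be concave and nonnegative, and let q_m ∈ (0,1) satisfy R(q_m) = 1 and R(q) ≤ 1 for all q ∈ [0,1]. Then (i) R(q) ≥ (1 − q)/(1 − q_m) for every q ∈ [q_m, 1], and (ii) ∫_{q_m}^1 R(q)/q dq ≥ −ln(q_m)/(1 − q_m) − 1; consequently the expected payment of bidding the monopoly price in the sample-bid mechanism with α = 0.7 satisfies 0.7·(1 + ∫_{q_m}^1 R(q)/q dq) ≥ −0.7·ln(q_m)/(1 − q_m). -/
open MeasureTheory

/-- Computational core of Lemma 5.6: for a normalized concave revenue curve `R`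
(maximum revenue `R q_m = 1` at monopoly quantile `q_m`), one has
(i) `R q ≥ (1 - q)/(1 - q_m)` on `[q_m, 1]`,
(ii) `∫ q in q_m..1, R q / q ≥ -log q_m / (1 - q_m) - 1`, and consequently
(iii) the expected payment of bidding the monopoly price in the sample-bid mechanism
with `α = 0.7` satisfies `0.7 * (1 + ∫ q in q_m..1, R q / q) ≥ -0.7 * log q_m / (1 - q_m)`. -/
theorem monopoly_bid_payment_lower_bound
    (R : ℝ → ℝ)
    (hconc : ConcaveOn ℝ (Set.Icc 0 1) R)
    (hnonneg : ∀ q ∈ Set.Icc (0:ℝ) 1, 0 ≤ R q)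
    (qm : ℝ) (hqm : qm ∈ Set.Ioo (0:ℝ) 1)
    (hRqm : R qm = 1)
    (hRle : ∀ q ∈ Set.Icc (0:ℝ) 1, R q ≤ 1) :
    (∀ q ∈ Set.Icc qm 1, (1 - q) / (1 - qm) ≤ R q)
    ∧ (-Real.log qm / (1 - qm) - 1 ≤ ∫ q in qm..1, R q / q)
    ∧ (-(0.7 * Real.log qm) / (1 - qm) ≤ 0.7 * (1 + ∫ q in qm..1, R q / q)) := by
  obtain ⟨hqm0, hqm1⟩ := hqm
  have h1qm : (0:ℝ) < 1 - qm := by linarith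
  -- Part (i)
  have part1 : ∀ q ∈ Set.Icc qm 1, (1 - q) / (1 - qm) ≤ R q := by
    intro q hq
    obtain ⟨hq1, hq2⟩ := hq
    have ht : q = ((1 - q) / (1 - qm)) * qm + ((q - qm) / (1 - qm)) * 1 := by
      field_simp; ring
    have hmem1 : qm ∈ Set.Icc (0:ℝ) 1 := ⟨le_of_lt hqm0, le_of_lt hqm1⟩
    have hmem2 : (1:ℝ) ∈ Set.Icc (0:ℝ) 1 := ⟨zero_le_one, le_refl 1⟩
    have ha : (0:ℝ) ≤ (1 - q) / (1 - qm) := div_nonneg (by linarith) h1qm.le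
    have hb : (0:ℝ) ≤ (q - qm) / (1 - qm) := div_nonneg (by linarith) h1qm.le
    have hab : (1 - q) / (1 - qm) + (q - qm) / (1 - qm) = 1 := by
      field_simp
      ring
    have := hconc.2 hmem1 hmem2 ha hb hab
    simp only [smul_eq_mul] at this
    rw [← ht] at this
    have hR1 : 0 ≤ R 1 := hnonneg 1 hmem2
    calc (1 - q) / (1 - qm) = (1 - q) / (1 - qm) * R qm := by rw [hRqm]; ring
      _ ≤ (1 - q) / (1 - qm) * R qm + (q - qm) / (1 - qm) * R 1 := by nlinarith
      _ ≤ R q := this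
  -- Integrability of R q / q on [qm, 1]
  have hcont : ContinuousOn R (Set.Ioo 0 1) := by
    have := hconc.continuousOn_interior
    rwa [interior_Icc] at this
  have hcont' : ContinuousOn (fun q => R q / q) (Set.Ioo qm 1) := by
    apply ContinuousOn.div
    · exact hcont.mono (fun x hx => ⟨lt_trans hqm0 hx.1, hx.2⟩)
    · exact continuousOn_id
    · intro x hx; exact ne_of_gt (lt_trans hqm0 hx.1)
  have hint : IntervalIntegrable (fun q => R q / q) volume qm 1 := by
    rw [intervalIntegrable_iff_integrableOn_Ioc_of_le hqm1.le, IntegrableOn,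
      ← Measure.restrict_congr_set Ioo_ae_eq_Ioc]
    have hmeas : AEStronglyMeasurable (fun q => R q / q)
        (volume.restrict (Set.Ioo qm 1)) :=
      (hcont'.aestronglyMeasurable measurableSet_Ioo)
    refine ⟨hmeas, ?_⟩
    apply MeasureTheory.HasFiniteIntegral.of_bounded (C := 1 / qm)
    filter_upwards [MeasureTheory.ae_restrict_mem measurableSet_Ioo] with x hx
    have hx0 : 0 < x := lt_trans hqm0 hx.1
    have hxmem : x ∈ Set.Icc (0:ℝ) 1 := ⟨hx0.le, hx.2.le⟩
    rw [Real.norm_eq_abs, abs_div, abs_of_nonneg (hnonneg x hxmem), abs_of_pos hx0]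
    apply div_le_div₀ (by positivity) (hRle x hxmem) hqm0 hx.1.le
  -- lower bound function is integrable
  have hintlb : IntervalIntegrable (fun q : ℝ => (1 - q) / ((1 - qm) * q)) volume qm 1 := by
    apply ContinuousOn.intervalIntegrable
    apply ContinuousOn.div
    · fun_prop
    · fun_prop
    · intro x hx
      rw [Set.uIcc_of_le hqm1.le] at hx
      have : 0 < x := lt_of_lt_of_le hqm0 hx.1
      positivity
  -- compare
  have hmono : ∫ q in qm..1, (1 - q) / ((1 - qm) * q) ≤ ∫ q in qm..1, R q / q := by
    apply intervalIntegral.integral_mono_on hqm1.le hintlb hint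
    intro x hx
    have hx0 : 0 < x := lt_of_lt_of_le hqm0 hx.1
    have h := part1 x hx
    calc (1 - x) / ((1 - qm) * x) = ((1 - x) / (1 - qm)) / x := by
          rw [div_div]
      _ ≤ R x / x := by gcongr
  -- compute lower integral
  have hcalc : ∫ q in qm..1, (1 - q) / ((1 - qm) * q)
      = -Real.log qm / (1 - qm) - 1 := by
    have : ∀ q ∈ Set.uIcc qm 1, (1 - q) / ((1 - qm) * q)
        = (1 / (1 - qm)) * (1 / q) - 1 / (1 - qm) := by
      intro q hq
      rw [Set.uIcc_of_le hqm1.le] at hq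
      have hq0 : (0:ℝ) < q := lt_of_lt_of_le hqm0 hq.1
      field_simp
    rw [intervalIntegral.integral_congr this]
    have hinv : IntervalIntegrable (fun q : ℝ => (1 / (1 - qm)) * (1 / q)) volume qm 1 := by
      apply IntervalIntegrable.const_mul
      apply intervalIntegral.intervalIntegrable_one_div
      · intro x hx
        rw [Set.uIcc_of_le hqm1.le] at hx
        exact ne_of_gt (lt_of_lt_of_le hqm0 hx.1)
      · fun_prop
    rw [intervalIntegral.integral_sub hinv (intervalIntegrable_const)]
    rw [intervalIntegral.integral_const_mul, integral_one_div (by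
      intro h; rw [Set.uIcc_of_le hqm1.le] at h
      exact absurd h.1 (not_le.mpr hqm0))]
    rw [intervalIntegral.integral_const, one_div qm, Real.log_inv, smul_eq_mul]
    field_simp
  have part2 : -Real.log qm / (1 - qm) - 1 ≤ ∫ q in qm..1, R q / q := by
    rw [← hcalc]; exact hmono
  refine ⟨part1, part2, ?_⟩
  have heq : -(0.7 * Real.log qm) / (1 - qm)
      = 0.7 * (1 + (-Real.log qm / (1 - qm) - 1)) := by
    field_simp
    ring
  rw [heq]
  nlinarith [part2]
end

section
/- For every q̂ ∈ [0.62, 1), every v ∈ [0, 1/q̂], and every b ≥ 0, it holds that v·b·(1 − q̂)/(b·(1 − q̂) + 1) ≤ 0.7·ln(b·(1 − q̂) + 1)/(1 − q̂). -/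
/-- Case-(i) computation in Lemma 5.8: for `q̂ ∈ [0.62, 1)`, a value `v ∈ [0, 1/q̂]`,
and any bid `b ≥ 0`, the utility against the truncated revenue curve is nonpositive:
`v * b * (1 - q̂) / (b * (1 - q̂) + 1) ≤ 0.7 * log (b * (1 - q̂) + 1) / (1 - q̂)`. -/
theorem truncated_curve_low_value_utility_nonpositive
    (qh v b : ℝ) (hqh : qh ∈ Set.Ico (0.62:ℝ) 1)
    (hv : v ∈ Set.Icc (0:ℝ) (1 / qh)) (hb : 0 ≤ b) :
    v * b * (1 - qh) / (b * (1 - qh) + 1)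
      ≤ 0.7 * Real.log (b * (1 - qh) + 1) / (1 - qh) := by
  obtain ⟨hq1, hq2⟩ := hqh
  obtain ⟨hv0, hv1⟩ := hv
  have hqpos : (0:ℝ) < qh := by norm_num at hq1 ⊢; linarith
  have h1q : (0:ℝ) < 1 - qh := by linarith
  set x := b * (1 - qh) with hxdef
  have hx : 0 ≤ x := mul_nonneg hb (by linarith)
  have hx1 : (0:ℝ) < x + 1 := by linarith
  -- log lower bound: x/(x+1) ≤ log(x+1)
  have hlog : x / (x + 1) ≤ Real.log (x + 1) := by
    have hy : (0:ℝ) < 1 / (x + 1) := by positivity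
    have h := Real.log_le_sub_one_of_pos hy
    rw [Real.log_div one_ne_zero (ne_of_gt hx1), Real.log_one] at h
    have h3 : x / (x + 1) = 1 - 1 / (x + 1) := by field_simp; ring
    linarith
  -- v ≤ 0.7 / (1 - qh)
  have hv' : v ≤ 0.7 / (1 - qh) := by
    have h17 : 1 / qh ≤ 0.7 / (1 - qh) := by
      rw [div_le_div_iff₀ hqpos h1q]
      nlinarith
    linarith
  have hxx : 0 ≤ x / (x + 1) := by positivity
  have key : v * (x / (x + 1)) ≤ (0.7 / (1 - qh)) * Real.log (x + 1) :=
    calc v * (x / (x + 1)) ≤ (0.7 / (1 - qh)) * (x / (x + 1)) :=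
          mul_le_mul_of_nonneg_right hv' hxx
      _ ≤ (0.7 / (1 - qh)) * Real.log (x + 1) :=
          mul_le_mul_of_nonneg_left hlog (by positivity)
  have e1 : v * b * (1 - qh) / (b * (1 - qh) + 1) = v * (x / (x + 1)) := by
    rw [hxdef]; ring
  have e2 : 0.7 * Real.log (b * (1 - qh) + 1) / (1 - qh)
      = (0.7 / (1 - qh)) * Real.log (x + 1) := by
    rw [hxdef]; ring
  rw [e1, e2]; exact key
end

section
/- Let R: [0,1] → ℝ be concave and nonnegative with R(q_m) = 1 = max_{q ∈ [0,1]} R(q) for some q_m ∈ (0,1). Let b ≥ 0 and let q_b ∈ [q_m, 1] satisfy R(q_b) = b·q_b. Then 0.7·( b·q_b + ∫_{q_b}^1 R(q)/q dq ) ≥ 0.7·ln( b·(1 − q_m) + 1 )/(1 − q_m). -/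
open MeasureTheory

/-- First part of Lemma 5.9: for a normalized concave revenue curve `R` (maximum
revenue `R q_m = 1` at monopoly quantile `q_m`), the expected payment of any bid `b`
whose quantile is `q_b ∈ [q_m, 1]` (i.e. `R q_b = b * q_b`) in the sample-bid mechanism
with `α = 0.7` is at least `0.7 * log (b * (1 - q_m) + 1) / (1 - q_m)`. -/
theorem sample_bid_payment_lower_bound
    (R : ℝ → ℝ)
    (hconc : ConcaveOn ℝ (Set.Icc 0 1) R)
    (hnonneg : ∀ q ∈ Set.Icc (0:ℝ) 1, 0 ≤ R q)
    (qm : ℝ) (hqm : qm ∈ Set.Ioo (0:ℝ) 1)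
    (hRqm : R qm = 1)
    (hRle : ∀ q ∈ Set.Icc (0:ℝ) 1, R q ≤ 1)
    (b : ℝ) (hb : 0 ≤ b)
    (qb : ℝ) (hqb : qb ∈ Set.Icc qm 1)
    (hqb_eq : R qb = b * qb) :
    0.7 * Real.log (b * (1 - qm) + 1) / (1 - qm)
      ≤ 0.7 * (b * qb + ∫ q in qb..1, R q / q) := by
  obtain ⟨hqm0, hqm1⟩ := hqm
  obtain ⟨hqbm, hqb1⟩ := hqb
  have hqb0 : 0 < qb := lt_of_lt_of_le hqm0 hqbm
  set L : ℝ := 1 - qm with hL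
  have hL0 : 0 < L := by simp only [hL]; linarith
  -- chord lower bound on [qm, 1]
  have hchord : ∀ q ∈ Set.Icc qm 1, (1 - q) / L ≤ R q := by
    rintro q ⟨h1, h2⟩
    have ha : (0:ℝ) ≤ (1 - q) / L := by
      apply div_nonneg _ hL0.le; linarith
    have hb' : (0:ℝ) ≤ (q - qm) / L := by
      apply div_nonneg _ hL0.le; linarith
    have hab : (1 - q) / L + (q - qm) / L = 1 := by
      field_simp
      rw [hL]; ring
    have key := hconc.2 (x := qm) (y := 1)
      ⟨hqm0.le, hqm1.le⟩ ⟨zero_le_one, le_refl 1⟩ ha hb' hab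
    have hxy : ((1 - q) / L) • qm + ((q - qm) / L) • (1:ℝ) = q := by
      simp only [smul_eq_mul, mul_one]
      rw [div_mul_eq_mul_div, ← add_div, hL]
      rw [div_eq_iff (by linarith : (1:ℝ) - qm ≠ 0)]
      ring
    rw [hxy, hRqm] at key
    have hR1 : 0 ≤ R 1 := hnonneg 1 ⟨zero_le_one, le_refl 1⟩
    simp only [smul_eq_mul, mul_one] at key
    nlinarith [mul_nonneg hb' hR1]
  -- integrability of R q / q on [qb, 1]
  have hcontR : ContinuousOn R (Set.Ioo 0 1) := by
    have := hconc.continuousOn_interior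
    rwa [interior_Icc] at this
  have hcont : ContinuousOn (fun q : ℝ => R q / q) (Set.Ioo qb 1) := by
    apply ContinuousOn.div
    · exact hcontR.mono (fun x hx => ⟨lt_trans hqb0 hx.1, hx.2⟩)
    · exact continuousOn_id
    · intro x hx; exact ne_of_gt (lt_trans hqb0 hx.1)
  have hint : IntervalIntegrable (fun q : ℝ => R q / q) volume qb 1 := by
    rw [intervalIntegrable_iff_integrableOn_Ioo_of_le hqb1]
    apply Integrable.mono' (g := fun _ => (1:ℝ)/qb)
    · exact integrableOn_const measure_Ioo_lt_top.ne
    · exact (hcont.aemeasurable measurableSet_Ioo).aestronglyMeasurable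
    · filter_upwards [ae_restrict_mem measurableSet_Ioo] with x hx
      have hx0 : 0 < x := lt_trans hqb0 hx.1
      rw [Real.norm_eq_abs, abs_div, abs_of_nonneg (hnonneg x ⟨hx0.le, hx.2.le⟩),
        abs_of_pos hx0]
      exact div_le_div₀ (by norm_num) (hRle x ⟨hx0.le, hx.2.le⟩) hqb0 hx.1.le
  -- lower bound integrand
  have hinv : IntervalIntegrable (fun q : ℝ => q⁻¹) volume qb 1 := by
    apply ContinuousOn.intervalIntegrable
    apply ContinuousOn.inv₀ continuousOn_id
    intro x hx
    rcases Set.mem_uIcc.mp hx with h | h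
    · exact ne_of_gt (lt_of_lt_of_le hqb0 h.1)
    · exact ne_of_gt (lt_of_lt_of_le one_pos h.1)
  have hint2 : IntervalIntegrable (fun q : ℝ => (q⁻¹ - 1) / L) volume qb 1 := by
    apply IntervalIntegrable.div_const
    exact hinv.sub intervalIntegrable_const
  have hmono : (∫ q in qb..1, (q⁻¹ - 1) / L) ≤ ∫ q in qb..1, R q / q := by
    apply intervalIntegral.integral_mono_on hqb1 hint2 hint
    intro x hx
    have hx0 : 0 < x := lt_of_lt_of_le hqb0 hx.1
    have hchx : (1 - x) / L ≤ R x := hchord x ⟨le_trans hqbm hx.1, hx.2⟩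
    have heq : (x⁻¹ - 1) / L = ((1 - x) / L) / x := by
      rw [div_div, eq_div_iff (by positivity : L * x ≠ 0)]
      field_simp
    rw [heq]
    gcongr

  -- value of the lower bound integral
  have hval : (∫ q in qb..1, (q⁻¹ - 1) / L) = ((-Real.log qb) - (1 - qb)) / L := by
    rw [intervalIntegral.integral_div]
    congr 1
    rw [intervalIntegral.integral_sub hinv intervalIntegrable_const,
      integral_inv_of_pos hqb0 one_pos]
    rw [Real.log_div one_ne_zero hqb0.ne', Real.log_one]
    simp
  -- key elementary inequality: log x ≤ x - 1 with x = (b*L+1)*qb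
  have hx0 : 0 < (b * L + 1) * qb := by positivity
  have hkey := Real.log_le_sub_one_of_pos hx0
  rw [Real.log_mul (by positivity) hqb0.ne'] at hkey
  have step : Real.log (b * L + 1) / L ≤ b * qb + ((-Real.log qb) - (1 - qb)) / L := by
    rw [div_le_iff₀ hL0, add_mul, div_mul_cancel₀ _ hL0.ne']
    nlinarith
  have hI : Real.log (b * L + 1) / L ≤ b * qb + ∫ q in qb..1, R q / q := by
    calc Real.log (b * L + 1) / L ≤ b * qb + ((-Real.log qb) - (1 - qb)) / L := step
    _ ≤ b * qb + ∫ q in qb..1, R q / q := by rw [← hval]; linarith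
  rw [mul_div_assoc]
  exact mul_le_mul_of_nonneg_left hI (by norm_num)
end

section
/- Let R: [0,1] → ℝ be concave and nonnegative with R(q_m) = 1 = max_{q ∈ [0,1]} R(q) for some q_m ∈ (0,1). Let v ≥ 0 and let q ∈ [q_m, 1] satisfy R(q) = v·q. Then q ≥ 1/(1 + v·(1 − q_m)). -/
/-- First part of Lemma 5.10: for a normalized concave revenue curve `R` (maximum
revenue `R q_m = 1` at monopoly quantile `q_m`), the quantile `q ∈ [q_m, 1]` of any
value `v` (i.e. `R q = v * q`) satisfies `q ≥ 1 / (1 + v * (1 - q_m))`. -/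
theorem quantile_lower_bound_below_monopoly
    (R : ℝ → ℝ)
    (hconc : ConcaveOn ℝ (Set.Icc 0 1) R)
    (hnonneg : ∀ q ∈ Set.Icc (0:ℝ) 1, 0 ≤ R q)
    (qm : ℝ) (hqm : qm ∈ Set.Ioo (0:ℝ) 1)
    (hRqm : R qm = 1)
    (hRle : ∀ q ∈ Set.Icc (0:ℝ) 1, R q ≤ 1)
    (v : ℝ) (hv : 0 ≤ v)
    (q : ℝ) (hq : q ∈ Set.Icc qm 1)
    (hq_eq : R q = v * q) :
    1 / (1 + v * (1 - qm)) ≤ q := by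
  obtain ⟨hqm0, hqm1⟩ := hqm
  obtain ⟨hq1, hq2⟩ := hq
  have hqm1' : (0:ℝ) < 1 - qm := by linarith
  set a : ℝ := (1 - q) / (1 - qm) with ha
  set b : ℝ := (q - qm) / (1 - qm) with hb
  have ha0 : 0 ≤ a := div_nonneg (by linarith) hqm1'.le
  have hb0 : 0 ≤ b := div_nonneg (by linarith) hqm1'.le
  have hab : a + b = 1 := by
    rw [ha, hb]; field_simp; ring
  have hcomb : a * qm + b * 1 = q := by
    rw [ha, hb]; field_simp; ring
  have key := hconc.2 (x := qm) (y := 1)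
    ⟨hqm0.le, hqm1.le⟩ ⟨zero_le_one, le_refl 1⟩ ha0 hb0 hab
  simp only [smul_eq_mul] at key
  rw [hcomb, hRqm, hq_eq] at key
  have hR1 : 0 ≤ R 1 := hnonneg 1 ⟨zero_le_one, le_refl 1⟩
  have h1 : a ≤ v * q := by nlinarith
  have h2 : 1 - q ≤ v * q * (1 - qm) := by
    rw [ha, div_le_iff₀ hqm1'] at h1
    linarith
  rw [div_le_iff₀ (by nlinarith)]
  nlinarith
end

section
/- Let F be a cumulative distribution function with density f on [l,h] where 0 ≤ l ≤ h (so F(l) = 0 and F(h) = 1), and let x: [l,h] → [0,1] be monotone nondecreasing. Then ∫_l^h x(v)·( v·f(v) − (1 − F(v)) ) dv ≤ x(h) · sup_{p ∈ [l,h]} p·(1 − F(p)). -/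
open MeasureTheory

/-- Lemma 6.2 (Myerson virtual-welfare bound): for a distribution `F` with density `f`
on `[l, h] ⊆ [0, ∞)` and any monotone nondecreasing interim allocation
`x : [l,h] → [0,1]`, the expected virtual welfare
`∫ v in l..h, x v * (v * f v - (1 - F v))` is at most `x h` times the optimal
posted-price revenue `sup_{p ∈ [l,h]} p * (1 - F p)`. -/
theorem virtual_welfare_upper_bound
    (l h : ℝ) (hl : 0 ≤ l) (hlh : l ≤ h)
    (F f : ℝ → ℝ)
    (hf_cont : ContinuousOn f (Set.Icc l h))
    (hf_nonneg : ∀ v ∈ Set.Icc l h, 0 ≤ f v)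
    (hF_def : ∀ v ∈ Set.Icc l h, F v = ∫ t in l..v, f t)
    (hFh : F h = 1)
    (x : ℝ → ℝ)
    (hx_mono : MonotoneOn x (Set.Icc l h))
    (hx_range : ∀ v ∈ Set.Icc l h, x v ∈ Set.Icc (0:ℝ) 1) :
    ∫ v in l..h, x v * (v * f v - (1 - F v))
      ≤ x h * sSup ((fun p => p * (1 - F p)) '' Set.Icc l h) := by
  classical
  -- clamp function
  set c : ℝ → ℝ := fun v => max l (min v h) with hc_def
  have hc_mem : ∀ v, c v ∈ Set.Icc l h :=
    fun v => ⟨le_max_left _ _, max_le hlh (min_le_right _ _)⟩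
  have hc_mono : Monotone c := fun a b hab =>
    max_le_max le_rfl (min_le_min hab le_rfl)
  have hc_cont : Continuous c :=
    continuous_const.max (continuous_id.min continuous_const)
  have hc_eq : ∀ v ∈ Set.Icc l h, c v = v := by
    intro v hv
    simp [hc_def, min_eq_left hv.2, max_eq_right hv.1]
  have hch : c h = h := hc_eq h ⟨hlh, le_rfl⟩
  have hc_le_h : ∀ v, c v ≤ h := fun v => (hc_mem v).2
  -- continuous extension of f
  set fc : ℝ → ℝ := fun v => f (c v) with hfc_def
  have hfc_cont : Continuous fc := hf_cont.comp_continuous hc_cont hc_mem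
  have hfc_eq : ∀ v ∈ Set.Icc l h, fc v = f v := fun v hv => by
    simp [hfc_def, hc_eq v hv]
  -- antiderivative G = F on [l,h]
  set G : ℝ → ℝ := fun v => ∫ t in l..v, fc t with hG_def
  have hG_deriv : ∀ v, HasDerivAt G (fc v) v := fun v =>
    intervalIntegral.integral_hasDerivAt_right (hfc_cont.intervalIntegrable l v)
      (hfc_cont.stronglyMeasurableAtFilter _ _) hfc_cont.continuousAt
  have hG_cont : Continuous G := continuous_iff_continuousAt.mpr fun v => (hG_deriv v).continuousAt
  have hGF : ∀ v ∈ Set.Icc l h, G v = F v := by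
    intro v hv
    rw [hF_def v hv, hG_def]
    exact intervalIntegral.integral_congr (fun t ht => hfc_eq t
      (Set.uIcc_subset_Icc ⟨le_rfl, hlh⟩ hv ht))
  have hGh : G h = 1 := (hGF h ⟨hlh, le_rfl⟩).trans hFh
  -- virtual value (extended) and revenue curve
  set g : ℝ → ℝ := fun v => v * fc v - (1 - G v) with hg_def
  have hg_cont : Continuous g :=
    ((continuous_id.mul hfc_cont).sub (continuous_const.sub hG_cont))
  set R : ℝ → ℝ := fun p => p * (1 - G p) with hR_def
  have hR_cont : Continuous R := continuous_id.mul (continuous_const.sub hG_cont)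
  -- FTC : ∫ a..b g = R a - R b
  have hkey : ∀ a b : ℝ, (∫ v in a..b, g v) = R a - R b := by
    intro a b
    have hder : ∀ v ∈ Set.uIcc a b, HasDerivAt (fun p => -(p * (1 - G p))) (g v) v := by
      intro v _
      have h1 := (hasDerivAt_id v).mul ((hasDerivAt_const v (1:ℝ)).sub (hG_deriv v))
      have h2 : HasDerivAt (fun p => -(p * (1 - G p))) (-(1 * (1 - G v) + v * (0 - fc v))) v :=
        h1.neg
      convert h2 using 1
      rw [hg_def]; ring
    have := intervalIntegral.integral_eq_sub_of_hasDerivAt hder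
      (hg_cont.intervalIntegrable a b)
    rw [this]; ring
  have hRh : R h = 0 := by simp [hR_def, hGh]
  -- the sup
  set M : ℝ := sSup ((fun p => p * (1 - F p)) '' Set.Icc l h) with hM_def
  have himg : (fun p => p * (1 - F p)) '' Set.Icc l h = R '' Set.Icc l h := by
    apply Set.image_congr
    intro p hp
    rw [hR_def]; simp [hGF p hp]
  have hbdd : BddAbove ((fun p => p * (1 - F p)) '' Set.Icc l h) := by
    rw [himg]
    exact (isCompact_Icc.image hR_cont).bddAbove
  have hM_ub : ∀ t ∈ Set.Icc l h, R t ≤ M := by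
    intro t ht
    apply le_csSup hbdd
    rw [himg]
    exact Set.mem_image_of_mem _ ht
  have hM0 : 0 ≤ M := hRh ▸ hM_ub h ⟨hlh, le_rfl⟩
  -- monotone extension of x
  set X : ℝ → ℝ := fun v => x (c v) with hX_def
  have hX_mono : Monotone X := fun a b hab => hx_mono (hc_mem a) (hc_mem b) (hc_mono hab)
  have hX_meas : Measurable X := hX_mono.measurable
  have hXh : X h = x h := by rw [hX_def]; simp [hch]
  have hX_nonneg : ∀ v, 0 ≤ X v := fun v => (hx_range _ (hc_mem v)).1
  have hX_le : ∀ v, X v ≤ x h := fun v => by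
    rw [← hXh, hX_def]
    simp only [hch]
    exact hx_mono (hc_mem v) ⟨hlh, le_rfl⟩ (hc_le_h v)
  have hxh0 : 0 ≤ x h := hXh ▸ hX_nonneg h
  -- rewrite LHS
  set T : Set ℝ := Set.Ioc l h with hT_def
  have hT_meas : MeasurableSet T := measurableSet_Ioc
  have hTIcc : T ⊆ Set.Icc l h := Set.Ioc_subset_Icc_self
  have hLHS : (∫ v in l..h, x v * (v * f v - (1 - F v))) = ∫ v in T, X v * g v := by
    rw [intervalIntegral.integral_of_le hlh]
    apply setIntegral_congr_fun hT_meas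
    intro v hv
    have hv' := hTIcc hv
    simp only [hX_def, hg_def, hc_eq v hv', hfc_eq v hv', hGF v hv']
  rw [hLHS]
  -- layer-cake setup
  set S : Set ℝ := Set.Ioc (0:ℝ) (x h) with hS_def
  have hS_meas : MeasurableSet S := measurableSet_Ioc
  set Φ : ℝ → ℝ → ℝ := fun s v => if s < X v then g v else 0 with hΦ_def
  -- step A: inner integral over s
  have hstepA : ∀ v, (∫ s in S, Φ s v) = X v * g v := by
    intro v
    have h1 : (fun s => Φ s v) = (Set.Iio (X v)).indicator (fun _ => g v) := by
      funext s
      simp [hΦ_def, Set.indicator_apply, Set.mem_Iio]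
    rw [h1, setIntegral_indicator measurableSet_Iio, setIntegral_const]
    have h2 : S ∩ Set.Iio (X v) = Set.Ioo 0 (X v) := by
      ext s
      constructor
      · rintro ⟨⟨h01, _⟩, h3⟩; exact ⟨h01, h3⟩
      · rintro ⟨h01, h3⟩; exact ⟨⟨h01, h3.le.trans (hX_le v)⟩, h3⟩
    rw [h2, measureReal_def, Real.volume_Ioo, ENNReal.toReal_ofReal (by simpa using hX_nonneg v)]
    simp [smul_eq_mul]
  -- step B: integrability on the product
  have hprod_eq : (volume.restrict S).prod (volume.restrict T)
      = (volume.prod volume).restrict (S ×ˢ T) := Measure.prod_restrict S T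
  obtain ⟨C, hC⟩ := isCompact_Icc.exists_bound_of_continuousOn
    (hg_cont.continuousOn : ContinuousOn g (Set.Icc l h))
  have hΦ_meas : Measurable (Function.uncurry Φ) := by
    have hA : MeasurableSet {p : ℝ × ℝ | p.1 < X p.2} := by
      have : Measurable fun p : ℝ × ℝ => X p.2 - p.1 :=
        (hX_meas.comp measurable_snd).sub measurable_fst
      have := this measurableSet_Ioi (t := Set.Ioi 0)
      convert this using 1
      ext p
      simp [sub_pos]
    have hgm : Measurable fun p : ℝ × ℝ => g p.2 := hg_cont.measurable.comp measurable_snd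
    have : Function.uncurry Φ = fun p : ℝ × ℝ =>
        Set.indicator {p : ℝ × ℝ | p.1 < X p.2} (fun p => g p.2) p := by
      funext p
      simp [Function.uncurry, hΦ_def, Set.indicator_apply, Set.mem_setOf_eq]
    rw [this]
    exact hgm.indicator hA
  have hΦ_int : Integrable (Function.uncurry Φ) ((volume.restrict S).prod (volume.restrict T)) := by
    have hfin : IsFiniteMeasure ((volume.restrict S).prod (volume.restrict T)) := by
      have h1 : IsFiniteMeasure (volume.restrict S) :=
        ⟨by rw [Measure.restrict_apply_univ]; exact measure_Ioc_lt_top⟩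
      have h2 : IsFiniteMeasure (volume.restrict T) :=
        ⟨by rw [Measure.restrict_apply_univ]; exact measure_Ioc_lt_top⟩
      infer_instance
    apply Integrable.mono' (g := fun _ => C) (integrable_const C)
      hΦ_meas.aestronglyMeasurable
    · rw [hprod_eq]
      filter_upwards [ae_restrict_mem (hS_meas.prod hT_meas)] with p hp
      have hp2 : p.2 ∈ Set.Icc l h := hTIcc hp.2
      have hgb := hC p.2 hp2
      rw [Function.uncurry]
      by_cases hlt : p.1 < X p.2
      · simp only [hΦ_def, if_pos hlt]
        exact hgb
      · simp only [hΦ_def, if_neg hlt]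
        simpa using le_trans (norm_nonneg (g p.2)) hgb
  -- swap
  have hswap : (∫ v in T, ∫ s in S, Φ s v) = ∫ s in S, ∫ v in T, Φ s v :=
    (integral_integral_swap hΦ_int).symm
  have hL2 : (∫ v in T, X v * g v) = ∫ s in S, ∫ v in T, Φ s v := by
    rw [← hswap]
    exact integral_congr_ae (Filter.Eventually.of_forall (fun v => (hstepA v).symm))
  rw [hL2]
  -- step D: bound inner integral by M for s ∈ S
  have hstepD : ∀ s ∈ S, (∫ v in T, Φ s v) ≤ M := by
    intro s hs
    have hA_meas : MeasurableSet {v : ℝ | s < X v} :=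
      hX_meas measurableSet_Ioi (t := Set.Ioi s)
    have hind : (fun v => Φ s v) = Set.indicator {v : ℝ | s < X v} g := by
      funext v
      simp [hΦ_def, Set.indicator_apply, Set.mem_setOf_eq]
    rw [hind, setIntegral_indicator hA_meas]
    by_cases hB : ({v ∈ Set.Icc l h | s < X v}).Nonempty
    · set t := sInf {v ∈ Set.Icc l h | s < X v} with ht_def
      have hBbdd : BddBelow {v ∈ Set.Icc l h | s < X v} := ⟨l, fun w hw => hw.1.1⟩
      have htl : l ≤ t := le_csInf hB (fun w hw => hw.1.1)
      have hth : t ≤ h := by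
        obtain ⟨w, hw⟩ := hB
        exact (csInf_le hBbdd hw).trans hw.1.2
      have hsub1 : Set.Ioc t h ⊆ T ∩ {v : ℝ | s < X v} := by
        intro v hv
        obtain ⟨w, hw, hwv⟩ := exists_lt_of_csInf_lt hB hv.1
        refine ⟨⟨lt_of_le_of_lt htl hv.1, hv.2⟩, ?_⟩
        exact lt_of_lt_of_le hw.2 (hX_mono hwv.le)
      have hsub2 : T ∩ {v : ℝ | s < X v} ⊆ Set.Icc t h := by
        rintro v ⟨hvT, hvA⟩
        exact ⟨csInf_le hBbdd ⟨hTIcc hvT, hvA⟩, hvT.2⟩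
      have hae : (T ∩ {v : ℝ | s < X v} : Set ℝ) =ᶠ[ae volume] (Set.Ioc t h : Set ℝ) := by
        have hne : ∀ᵐ v : ℝ, v ≠ t := by
          rw [ae_iff]
          have h' : {v : ℝ | ¬ v ≠ t} = {t} := by ext v; simp [not_ne_iff]
          rw [h']
          exact Real.volume_singleton
        filter_upwards [hne] with v hv
        simp only [eq_iff_iff]
        constructor
        · intro hmem
          rcases (hsub2 hmem).1.lt_or_eq with h1 | h1
          · exact ⟨h1, (hsub2 hmem).2⟩
          · exact absurd h1.symm hv
        · intro hmem
          exact hsub1 hmem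
      rw [setIntegral_congr_set hae, ← intervalIntegral.integral_of_le hth, hkey, hRh, sub_zero]
      exact hM_ub t ⟨htl, hth⟩
    · have hempty : T ∩ {v : ℝ | s < X v} = ∅ := by
        rw [Set.eq_empty_iff_forall_notMem]
        rintro v ⟨hvT, hvA⟩
        exact hB ⟨v, hTIcc hvT, hvA⟩
      rw [hempty]
      simpa using hM0
  -- step E: conclude
  have hinner_int : Integrable (fun s => ∫ v in T, Φ s v) (volume.restrict S) := by
    have := hΦ_int.integral_prod_left
    exact this
  calc (∫ s in S, ∫ v in T, Φ s v)
      ≤ ∫ _ in S, M := by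
        apply integral_mono_ae hinner_int (integrable_const M)
        filter_upwards [ae_restrict_mem hS_meas] with s hs
        exact hstepD s hs
    _ = x h * M := by
        rw [setIntegral_const, hS_def, measureReal_def, Real.volume_Ioc,
          ENNReal.toReal_ofReal (by simpa using hxh0)]
        simp [smul_eq_mul]
end

section
/- Let 0 ≤ l ≤ h and let x: [l,h] → [0,1] be measurable with U = ∫_l^h x(v) dv. Then ∫_l^h x(v)·(2v − h) dv ≤ U·(h − U). Consequently, if in addition h ≤ 2l, β ≥ 1, and ∫_l^h x(v)·(2v − h) dv ≥ l·(h − l)/β, then h² ≥ 4·l·(h − l)/β and U ≥ (h − √(h² − 4·l·(h − l)/β))/2. -/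
open MeasureTheory

/-- Lemma 6.3: for `0 ≤ l ≤ h` and a measurable allocation `x : [l,h] → [0,1]` with
`U = ∫ v in l..h, x v`, one has `∫ v in l..h, x v * (2v - h) ≤ U * (h - U)`.
Consequently, if `h ≤ 2l`, `β ≥ 1`, and `∫ v in l..h, x v * (2v - h) ≥ l * (h - l) / β`,
then `h² ≥ 4l(h - l)/β` and `U ≥ (h - √(h² - 4l(h - l)/β))/ 2`. -/
theorem uniform_distribution_high_type_utility
    (l h : ℝ) (hl : 0 ≤ l) (hlh : l ≤ h)
    (x : ℝ → ℝ) (hx_meas : Measurable x)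
    (hx_range : ∀ v ∈ Set.Icc l h, x v ∈ Set.Icc (0:ℝ) 1) :
    (∫ v in l..h, x v * (2 * v - h))
        ≤ (∫ v in l..h, x v) * (h - ∫ v in l..h, x v)
    ∧ (∀ β : ℝ, h ≤ 2 * l → 1 ≤ β →
        l * (h - l) / β ≤ ∫ v in l..h, x v * (2 * v - h) →
        4 * l * (h - l) / β ≤ h ^ 2
        ∧ (h - Real.sqrt (h ^ 2 - 4 * l * (h - l) / β)) / 2 ≤ ∫ v in l..h, x v) := by
  -- Integrability of x on [l,h]
  have Ix : IntervalIntegrable x volume l h := by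
    rw [intervalIntegrable_iff]
    apply Measure.integrableOn_of_bounded (M := 1) (measure_Ioc_lt_top).ne
      hx_meas.aestronglyMeasurable
    · filter_upwards [ae_restrict_mem measurableSet_Ioc] with v hv
      have hv' : v ∈ Set.Icc l h := by
        rcases Set.uIoc_subset_uIcc hv with h'
        rwa [Set.uIcc_of_le hlh] at h'
      have := hx_range v hv'
      rw [Real.norm_eq_abs, abs_le]
      constructor <;> linarith [this.1, this.2]
  have If : IntervalIntegrable (fun v => x v * (2 * v - h)) volume l h :=
    Ix.mul_continuousOn (by fun_prop)
  set U : ℝ := ∫ v in l..h, x v with hU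
  have hU0 : 0 ≤ U := intervalIntegral.integral_nonneg hlh (fun v hv => (hx_range v hv).1)
  have hUle : U ≤ h - l := by
    have h1 : U ≤ ∫ _ in l..h, (1:ℝ) :=
      intervalIntegral.integral_mono_on hlh Ix intervalIntegrable_const
        (fun v hv => (hx_range v hv).2)
    simpa using h1
  set a : ℝ := h - U with ha
  have hla : l ≤ a := by simp only [ha]; linarith
  have hah : a ≤ h := by simp only [ha]; linarith
  -- Dominating function g
  have cmax : Continuous fun v : ℝ => max v a - a :=
    (continuous_id.max continuous_const).sub continuous_const
  set g : ℝ → ℝ := fun v => x v * (2 * a - h) + 2 * (max v a - a) with hg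
  have Ig : IntervalIntegrable g volume l h :=
    (Ix.mul_const _).add ((continuous_const.mul cmax).intervalIntegrable l h)
  have hpt : ∀ v ∈ Set.Icc l h, x v * (2 * v - h) ≤ g v := by
    intro v hv
    have hx0 := (hx_range v hv).1
    have hx1 := (hx_range v hv).2
    simp only [hg]
    rcases le_total v a with hva | hav
    · rw [max_eq_right hva]
      have : x v * (2 * v - h) ≤ x v * (2 * a - h) :=
        mul_le_mul_of_nonneg_left (by linarith) hx0
      linarith
    · rw [max_eq_left hav]
      nlinarith
  have key : ∫ v in l..h, x v * (2 * v - h) ≤ ∫ v in l..h, g v :=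
    intervalIntegral.integral_mono_on hlh If Ig hpt
  -- Compute ∫ g
  have hmax1 : (∫ v in l..a, (max v a - a)) = 0 := by
    rw [intervalIntegral.integral_congr (g := fun _ => (0:ℝ))]
    · simp
    · intro v hv
      rw [Set.uIcc_of_le hla] at hv
      simp [max_eq_right hv.2]
  have hmax2 : (∫ v in a..h, (max v a - a)) = (h - a) ^ 2 / 2 := by
    rw [intervalIntegral.integral_congr (g := fun v => v - a)]
    · rw [intervalIntegral.integral_sub intervalIntegral.intervalIntegrable_id intervalIntegrable_const]
      simp [integral_id]
      ring
    · intro v hv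
      rw [Set.uIcc_of_le hah] at hv
      simp [max_eq_left hv.1]
  have hmax : (∫ v in l..h, (max v a - a)) = (h - a) ^ 2 / 2 := by
    rw [← intervalIntegral.integral_add_adjacent_intervals (b := a)
      (cmax.intervalIntegrable l a) (cmax.intervalIntegrable a h), hmax1, hmax2]
    ring
  have hgint : (∫ v in l..h, g v) = U * (2 * a - h) + (h - a) ^ 2 := by
    simp only [hg]
    rw [intervalIntegral.integral_add (Ix.mul_const _)
      (show IntervalIntegrable (fun v : ℝ => 2 * (max v a - a)) volume l h from
        (continuous_const.mul cmax).intervalIntegrable l h),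
      intervalIntegral.integral_mul_const, intervalIntegral.integral_const_mul, hmax, ← hU]
    ring
  have main : (∫ v in l..h, x v * (2 * v - h)) ≤ U * (h - U) := by
    have : U * (2 * a - h) + (h - a) ^ 2 = U * (h - U) := by
      simp only [ha]; ring
    linarith [key, hgint.symm ▸ key]
  refine ⟨main, ?_⟩
  intro β h2l hβ hrev
  have hβ0 : (0:ℝ) < β := by linarith
  have hc0 : 0 ≤ l * (h - l) / β := div_nonneg (mul_nonneg hl (by linarith)) hβ0.le
  have hcU : l * (h - l) / β ≤ U * (h - U) := le_trans hrev main
  have heq : 4 * l * (h - l) / β = 4 * (l * (h - l) / β) := by ring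
  constructor
  · rw [heq]
    nlinarith [sq_nonneg (h - 2 * U)]
  · rcases le_total (h - 2 * U) 0 with hneg | hpos
    · have := Real.sqrt_nonneg (h ^ 2 - 4 * l * (h - l) / β)
      linarith
    · have hsq : (h - 2 * U) ^ 2 ≤ h ^ 2 - 4 * l * (h - l) / β := by
        rw [heq]; nlinarith
      have := Real.sqrt_le_sqrt hsq
      rw [Real.sqrt_sq hpos] at this
      linarith
end
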